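/- Let f_LS : ℝ → ℝ be defined by f_LS(z) = −(z − 1)² + 1. Let k ≥ 1, let x₁, …, x_k be i.i.d. real-valued random variables with distribution P, and let y₁, …, y_k be i.i.d. real-valued random variables with distribution Q, with all 2k variables mutually independent. Let C : ℝ → ℝ be measurable with C square-integrable under both P and Q, and write μ_y = E[C(y₁)] and σ_y² = Var[C(y₁)]. Then E[ (1/k)·Σ_{i=1}^k f_LS( C(x_i) − (1/k)·Σ_{j=1}^k C(y_j) ) ] = E_{x ∼ P}[ f_LS( C(x) − μ_y ) ] − σ_y²/k. -/

import Mathlib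

open MeasureTheory ProbabilityTheory

/-- The least-squares GAN loss. -/
noncomputable def fLS (z : ℝ) : ℝ := -(z - 1)^2 + 1

/-- The mini-batch RaLSGAN estimator of the first term has expectation equal to the
population term minus `σ_y² / k` (finite-sample bias `-σ_y²/k`). -/
theorem raLSGAN_first_term_bias
    {Ω : Type*} [MeasurableSpace Ω] (μ : Measure Ω) [IsProbabilityMeasure μ]
    (P Q : Measure ℝ) [IsProbabilityMeasure P] [IsProbabilityMeasure Q]
    (k : ℕ) (hk : 1 ≤ k)
    (x y : Fin k → Ω → ℝ)
    (hxm : ∀ i, Measurable (x i)) (hym : ∀ j, Measurable (y j))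
    (hx_law : ∀ i, μ.map (x i) = P) (hy_law : ∀ j, μ.map (y j) = Q)
    (hindep : iIndepFun (Sum.elim x y) μ)
    (C : ℝ → ℝ) (hCm : Measurable C)
    (hC2P : MemLp C 2 P) (hC2Q : MemLp C 2 Q)
    (μy σy2 : ℝ)
    (hμy : μy = ∫ z, C z ∂Q)
    (hσy2 : σy2 = ∫ z, (C z - μy)^2 ∂Q) :
    ∫ ω, (1 / (k : ℝ)) * ∑ i : Fin k,
        fLS (C (x i ω) - (1 / (k : ℝ)) * ∑ j : Fin k, C (y j ω)) ∂μ
      = (∫ z, fLS (C z - μy) ∂P) - σy2 / k := by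
  have hk0 : (k : ℝ) ≠ 0 := Nat.cast_ne_zero.mpr (by omega)
  set c : ℝ := 1 / (k : ℝ) with hc
  set S : Ω → ℝ := fun ω => ∑ j : Fin k, C (y j ω) with hS
  -- independence of the composed variables
  have hFindep : iIndepFun
      (fun i ω => C (Sum.elim x y i ω)) μ := by
    have := hindep.comp (fun _ => C) (fun _ => hCm)
    exact this
  have hXY : ∀ i j, IndepFun (fun ω => C (x i ω)) (fun ω => C (y j ω)) μ := by
    intro i j
    exact hFindep.indepFun (show (Sum.inl i : Fin k ⊕ Fin k) ≠ Sum.inr j by simp)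
  have hYY : ∀ i j : Fin k, i ≠ j →
      IndepFun (fun ω => C (y i ω)) (fun ω => C (y j ω)) μ := by
    intro i j hij
    exact hFindep.indepFun (show (Sum.inr i : Fin k ⊕ Fin k) ≠ Sum.inr j by simpa)
  -- L² membership
  have hX2 : ∀ i, MemLp (fun ω => C (x i ω)) 2 μ := by
    intro i
    have h := hC2P
    rw [← hx_law i] at h
    exact (memLp_map_measure_iff hCm.aestronglyMeasurable (hxm i).aemeasurable).1 h
  have hY2 : ∀ j, MemLp (fun ω => C (y j ω)) 2 μ := by
    intro j
    have h := hC2Q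
    rw [← hy_law j] at h
    exact (memLp_map_measure_iff hCm.aestronglyMeasurable (hym j).aemeasurable).1 h
  have hXint : ∀ i, Integrable (fun ω => C (x i ω)) μ :=
    fun i => (hX2 i).integrable one_le_two
  have hYint : ∀ j, Integrable (fun ω => C (y j ω)) μ :=
    fun j => (hY2 j).integrable one_le_two
  have hSint : Integrable S μ := integrable_finset_sum _ (fun j _ => hYint j)
  -- moment transfer
  have momP : ∀ (g : ℝ → ℝ), Measurable g → ∀ i,
      ∫ ω, g (C (x i ω)) ∂μ = ∫ z, g (C z) ∂P := by
    intro g hg i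
    rw [← hx_law i]
    exact (integral_map (hxm i).aemeasurable (hg.comp hCm).aestronglyMeasurable).symm
  have momQ : ∀ (g : ℝ → ℝ), Measurable g → ∀ j,
      ∫ ω, g (C (y j ω)) ∂μ = ∫ z, g (C z) ∂Q := by
    intro g hg j
    rw [← hy_law j]
    exact (integral_map (hym j).aemeasurable (hg.comp hCm).aestronglyMeasurable).symm
  set EX : ℝ := ∫ z, C z ∂P with hEXdef
  set EX2 : ℝ := ∫ z, (C z)^2 ∂P with hEX2def
  set EY2 : ℝ := ∫ z, (C z)^2 ∂Q with hEY2def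
  have hEXi : ∀ i, ∫ ω, C (x i ω) ∂μ = EX := momP (fun t => t) measurable_id
  have hEYj : ∀ j, ∫ ω, C (y j ω) ∂μ = μy := by
    intro j; rw [hμy]; exact momQ (fun t => t) measurable_id j
  have hEXi2 : ∀ i, ∫ ω, (C (x i ω))^2 ∂μ = EX2 :=
    momP (fun t => t^2) (measurable_id.pow_const 2)
  have hEYj2 : ∀ j, ∫ ω, (C (y j ω))^2 ∂μ = EY2 :=
    momQ (fun t => t^2) (measurable_id.pow_const 2)
  -- integrability and values of products
  have hXsqInt : ∀ i, Integrable (fun ω => (C (x i ω))^2) μ :=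
    fun i => (hX2 i).integrable_sq
  have hXYint : ∀ i j, Integrable (fun ω => C (x i ω) * C (y j ω)) μ :=
    fun i j => (hXY i j).integrable_mul (hXint i) (hYint j)
  have hEXY : ∀ i j, ∫ ω, C (x i ω) * C (y j ω) ∂μ = EX * μy := by
    intro i j
    have h := (hXY i j).integral_fun_mul_eq_mul_integral (hXint i).aestronglyMeasurable (hYint j).aestronglyMeasurable
    calc ∫ ω, C (x i ω) * C (y j ω) ∂μ
        = (∫ ω, C (x i ω) ∂μ) * ∫ ω, C (y j ω) ∂μ := h
      _ = EX * μy := by rw [hEXi, hEYj]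
  have hYYint : ∀ i j, Integrable (fun ω => C (y i ω) * C (y j ω)) μ := by
    intro i j
    rcases eq_or_ne i j with rfl | h
    · have := (hY2 i).integrable_sq
      exact this.congr (by filter_upwards with ω; rw [pow_two])
    · exact (hYY i j h).integrable_mul (hYint i) (hYint j)
  have hEYY : ∀ i j, ∫ ω, C (y i ω) * C (y j ω) ∂μ
      = if i = j then EY2 else μy * μy := by
    intro i j
    rcases eq_or_ne i j with rfl | h
    · simp only [if_pos rfl]
      rw [← hEYj2 i]
      exact integral_congr_ae (by filter_upwards with ω; rw [pow_two])
    · rw [if_neg h]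
      have := (hYY i j h).integral_fun_mul_eq_mul_integral (hYint i).aestronglyMeasurable (hYint j).aestronglyMeasurable
      calc ∫ ω, C (y i ω) * C (y j ω) ∂μ
          = (∫ ω, C (y i ω) ∂μ) * ∫ ω, C (y j ω) ∂μ := this
        _ = μy * μy := by rw [hEYj, hEYj]
  -- expansion of the integrand
  have expand : ∀ i : Fin k, (fun ω => fLS (C (x i ω) - c * S ω))
      = fun ω => ((-(C (x i ω)^2) + (2*c) * (∑ j : Fin k, C (x i ω) * C (y j ω)))
        + ((-(c^2)) * (∑ j : Fin k, ∑ l : Fin k, C (y j ω) * C (y l ω))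
          + (2 * C (x i ω) + (-(2*c)) * S ω))) := by
    intro i
    funext ω
    have h1 : (∑ j : Fin k, C (x i ω) * C (y j ω)) = C (x i ω) * S ω := by
      rw [hS, Finset.mul_sum]
    have h2 : (∑ j : Fin k, ∑ l : Fin k, C (y j ω) * C (y l ω)) = S ω * S ω := by
      rw [hS, Finset.sum_mul_sum]
    rw [h1, h2, fLS]
    ring
  -- value of each per-sample integral
  have hSsum : ∀ j : Fin k, (∑ l : Fin k, if j = l then EY2 else μy * μy)
      = (k : ℝ) * (μy * μy) + (EY2 - μy * μy) := by
    intro j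
    have h : ∀ l : Fin k, (if j = l then EY2 else μy * μy)
        = μy * μy + (if j = l then EY2 - μy * μy else 0) := by
      intro l; split <;> ring
    simp only [h, Finset.sum_add_distrib, Finset.sum_const, Finset.card_univ,
      Fintype.card_fin, nsmul_eq_mul, Finset.sum_ite_eq, Finset.mem_univ, if_pos]
  have keyfull : ∀ i : Fin k,
      Integrable (fun ω => fLS (C (x i ω) - c * S ω)) μ ∧
      ∫ ω, fLS (C (x i ω) - c * S ω) ∂μ
      = (-EX2 + (2*c) * ((k : ℝ) * (EX * μy)))
        + ((-(c^2)) * ((k : ℝ) * ((k : ℝ) * (μy * μy) + (EY2 - μy * μy)))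
          + (2 * EX + (-(2*c)) * ((k : ℝ) * μy))) := by
    intro i
    have I1 : Integrable (fun ω => -(C (x i ω)^2)) μ := (hXsqInt i).neg
    have I2 : Integrable (fun ω => (2*c) * (∑ j : Fin k, C (x i ω) * C (y j ω))) μ :=
      (integrable_finset_sum _ (fun j _ => hXYint i j)).const_mul _
    have I3 : Integrable
        (fun ω => (-(c^2)) * (∑ j : Fin k, ∑ l : Fin k, C (y j ω) * C (y l ω))) μ :=
      (integrable_finset_sum _ (fun j _ => integrable_finset_sum _
        (fun l _ => hYYint j l))).const_mul _
    have I4 : Integrable (fun ω => 2 * C (x i ω)) μ := (hXint i).const_mul _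
    have I5 : Integrable (fun ω => (-(2*c)) * S ω) μ := hSint.const_mul _
    constructor
    · rw [expand i]
      exact (I1.add I2).add (I3.add (I4.add I5))
    rw [expand i]
    have e0 : ∫ ω, ((-(C (x i ω)^2) + (2*c) * (∑ j : Fin k, C (x i ω) * C (y j ω)))
        + ((-(c^2)) * (∑ j : Fin k, ∑ l : Fin k, C (y j ω) * C (y l ω))
          + (2 * C (x i ω) + (-(2*c)) * S ω))) ∂μ
        = (∫ ω, (-(C (x i ω)^2) + (2*c) * (∑ j : Fin k, C (x i ω) * C (y j ω))) ∂μ)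
          + ∫ ω, ((-(c^2)) * (∑ j : Fin k, ∑ l : Fin k, C (y j ω) * C (y l ω))
            + (2 * C (x i ω) + (-(2*c)) * S ω)) ∂μ :=
      integral_add (I1.add I2) (I3.add (I4.add I5))
    have e1 : ∫ ω, (-(C (x i ω)^2) + (2*c) * (∑ j : Fin k, C (x i ω) * C (y j ω))) ∂μ
        = (∫ ω, -(C (x i ω)^2) ∂μ)
          + ∫ ω, (2*c) * (∑ j : Fin k, C (x i ω) * C (y j ω)) ∂μ := integral_add I1 I2
    have e2 : ∫ ω, ((-(c^2)) * (∑ j : Fin k, ∑ l : Fin k, C (y j ω) * C (y l ω))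
          + (2 * C (x i ω) + (-(2*c)) * S ω)) ∂μ
        = (∫ ω, (-(c^2)) * (∑ j : Fin k, ∑ l : Fin k, C (y j ω) * C (y l ω)) ∂μ)
          + ∫ ω, (2 * C (x i ω) + (-(2*c)) * S ω) ∂μ := integral_add I3 (I4.add I5)
    have e3 : ∫ ω, (2 * C (x i ω) + (-(2*c)) * S ω) ∂μ
        = (∫ ω, 2 * C (x i ω) ∂μ) + ∫ ω, (-(2*c)) * S ω ∂μ := integral_add I4 I5
    rw [e0, e1, e2, e3, integral_neg, integral_const_mul, integral_const_mul,
      integral_const_mul, integral_const_mul,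
      integral_finset_sum _ (fun j _ => hXYint i j),
      integral_finset_sum _ (fun j _ => integrable_finset_sum _ (fun l _ => hYYint j l))]
    have hA : ∫ ω, S ω ∂μ = (k : ℝ) * μy := by
      rw [hS, integral_finset_sum _ (fun j _ => hYint j)]
      simp [hEYj]
    have hB : (∑ j : Fin k, ∫ ω, C (x i ω) * C (y j ω) ∂μ) = (k : ℝ) * (EX * μy) := by
      simp [hEXY]
    have hCC : (∑ j : Fin k, ∫ ω, ∑ l : Fin k, C (y j ω) * C (y l ω) ∂μ)
        = (k : ℝ) * ((k : ℝ) * (μy * μy) + (EY2 - μy * μy)) := by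
      have h : ∀ j : Fin k, ∫ ω, ∑ l : Fin k, C (y j ω) * C (y l ω) ∂μ
          = (k : ℝ) * (μy * μy) + (EY2 - μy * μy) := by
        intro j
        rw [integral_finset_sum _ (fun l _ => hYYint j l)]
        simp only [hEYY]
        exact hSsum j
      simp only [h, Finset.sum_const, Finset.card_univ, Fintype.card_fin, nsmul_eq_mul]
    rw [hA, hB, hCC, hEXi i, hEXi2 i]
  have hfLSInt : ∀ i : Fin k, Integrable (fun ω => fLS (C (x i ω) - c * S ω)) μ :=
    fun i => (keyfull i).1
  have key : ∀ i : Fin k, ∫ ω, fLS (C (x i ω) - c * S ω) ∂μ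
      = (-EX2 + (2*c) * ((k : ℝ) * (EX * μy)))
        + ((-(c^2)) * ((k : ℝ) * ((k : ℝ) * (μy * μy) + (EY2 - μy * μy)))
          + (2 * EX + (-(2*c)) * ((k : ℝ) * μy))) := fun i => (keyfull i).2
  -- the right-hand side population integral
  have hRHS : ∫ z, fLS (C z - μy) ∂P
      = (-EX2 + (2*μy + 2) * EX) + (-(μy^2) - 2*μy) := by
    have e : (fun z => fLS (C z - μy))
        = fun z => (-(C z^2) + (2*μy + 2) * C z) + (-(μy^2) - 2*μy) := by
      funext z; rw [fLS]; ring
    have J1 : Integrable (fun z => -(C z^2)) P := hC2P.integrable_sq.neg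
    have J2 : Integrable (fun z => (2*μy + 2) * C z) P :=
      (hC2P.integrable one_le_two).const_mul _
    have e0 : ∫ z, ((-(C z^2) + (2*μy + 2) * C z) + (-(μy^2) - 2*μy)) ∂P
        = (∫ z, (-(C z^2) + (2*μy + 2) * C z) ∂P) + ∫ _z, (-(μy^2) - 2*μy : ℝ) ∂P :=
      integral_add (J1.add J2) (integrable_const _)
    have e1 : ∫ z, (-(C z^2) + (2*μy + 2) * C z) ∂P
        = (∫ z, -(C z^2) ∂P) + ∫ z, (2*μy + 2) * C z ∂P := integral_add J1 J2
    rw [e, e0, e1, integral_neg, integral_const_mul, integral_const]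
    simp [hEXdef, hEX2def]
  -- the variance identity
  have hσ : σy2 = EY2 - μy^2 := by
    rw [hσy2]
    have e : (fun z => (C z - μy)^2)
        = fun z => (C z^2 + (-(2*μy)) * C z) + μy^2 := by
      funext z; ring
    have J1 : Integrable (fun z => (C z^2 : ℝ)) Q := hC2Q.integrable_sq
    have J2 : Integrable (fun z => (-(2*μy)) * C z) Q :=
      (hC2Q.integrable one_le_two).const_mul _
    have e0 : ∫ z, ((C z^2 + (-(2*μy)) * C z) + μy^2) ∂Q
        = (∫ z, (C z^2 + (-(2*μy)) * C z) ∂Q) + ∫ _z, (μy^2 : ℝ) ∂Q :=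
      integral_add (J1.add J2) (integrable_const _)
    have e1 : ∫ z, (C z^2 + (-(2*μy)) * C z) ∂Q
        = (∫ z, (C z^2 : ℝ) ∂Q) + ∫ z, (-(2*μy)) * C z ∂Q := integral_add J1 J2
    rw [e, e0, e1, integral_const_mul, integral_const]
    rw [hEY2def, ← hμy]
    simp
    ring
  -- put things together
  have hLHS : ∫ ω, (1 / (k : ℝ)) * ∑ i : Fin k, fLS (C (x i ω) - c * S ω) ∂μ
      = c * ∑ i : Fin k, ∫ ω, fLS (C (x i ω) - c * S ω) ∂μ := by
    rw [← hc, integral_const_mul, integral_finset_sum _ (fun i _ => hfLSInt i)]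
  rw [show (fun ω => (1 / (k : ℝ)) * ∑ i : Fin k,
      fLS (C (x i ω) - (1 / (k : ℝ)) * ∑ j : Fin k, C (y j ω)))
      = fun ω => (1 / (k : ℝ)) * ∑ i : Fin k, fLS (C (x i ω) - c * S ω) from rfl] at *
  rw [hLHS, hRHS, hσ]
  simp only [key, Finset.sum_const, Finset.card_univ, Fintype.card_fin, nsmul_eq_mul]
  rw [hc]
  field_simp
  ring
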